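/- Let n be a positive integer, b > 0, c ∈ ℝⁿ with c_i > 0 for all i, and let Y = {y ∈ ℝⁿ | Σ_i y_i ≤ b and 0 ≤ y_i ≤ c_i for all i}. Let z ∈ ℝⁿ and suppose λ ≥ 0 is such that the vector y defined by y_i = min(max(z_i − λ, 0), c_i) for all i satisfies Σ_i y_i ≤ b and λ·(Σ_i y_i − b) = 0. Then y is the Euclidean projection of z onto Y, i.e., for every w ∈ Y, ‖y − z‖₂ ≤ ‖w − z‖₂, with equality only if w = y. -/

import Mathlib

/-- If `λ ≥ 0` and `y i = min (max (z i − λ) 0) (c i)` satisfies `∑ y ≤ b` and the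
complementary slackness condition `λ·(∑ y − b) = 0`, then `y` is the Euclidean
projection of `z` onto `Y = {y | ∑ y ≤ b, 0 ≤ y i ≤ c i}`. -/
theorem projection_characterization
    (n : ℕ) (hn : 0 < n) (b : ℝ) (hb : 0 < b)
    (c : EuclideanSpace ℝ (Fin n)) (hc : ∀ i, 0 < c i)
    (z : EuclideanSpace ℝ (Fin n)) (lam : ℝ) (hlam : 0 ≤ lam)
    (y : EuclideanSpace ℝ (Fin n))
    (hy : ∀ i, y i = min (max (z i - lam) 0) (c i))
    (hsum : ∑ i, y i ≤ b)
    (hslack : lam * ((∑ i, y i) - b) = 0) :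
    ∀ w : EuclideanSpace ℝ (Fin n),
      (∑ i, w i ≤ b ∧ ∀ i, 0 ≤ w i ∧ w i ≤ c i) →
        ‖y - z‖ ≤ ‖w - z‖ ∧ (‖y - z‖ = ‖w - z‖ → w = y) := by
  intro w ⟨hwb, hwc⟩
  -- pointwise key inequality
  have key : ∀ i, (z i - y i) * (w i - y i) ≤ lam * (w i - y i) := by
    intro i
    have hyi := hy i
    obtain ⟨hw0, hwci⟩ := hwc i
    have hci := hc i
    rcases le_or_gt (z i - lam) 0 with h1 | h1
    · have hy0 : y i = 0 := by
        rw [hyi, max_eq_right h1, min_eq_left hci.le]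
      rw [hy0]
      nlinarith
    · rcases le_or_gt (z i - lam) (c i) with h2 | h2
      · have : y i = z i - lam := by
          rw [hyi, max_eq_left h1.le, min_eq_left h2]
        rw [this]
        nlinarith
      · have : y i = c i := by
          rw [hyi, max_eq_left h1.le, min_eq_right h2.le]
        rw [this]
        nlinarith
  -- variational inequality
  have hVI : ∑ i, (z i - y i) * (w i - y i) ≤ 0 := by
    have h1 : ∑ i, (z i - y i) * (w i - y i) ≤ ∑ i, lam * (w i - y i) :=
      Finset.sum_le_sum fun i _ => key i
    have h2 : ∑ i, lam * (w i - y i) = lam * ((∑ i, w i) - b) - lam * ((∑ i, y i) - b) := by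
      rw [← Finset.mul_sum, Finset.sum_sub_distrib]
      ring
    have h3 : lam * ((∑ i, w i) - b) ≤ 0 := mul_nonpos_of_nonneg_of_nonpos hlam (by linarith)
    rw [h2, hslack] at h1
    linarith
  have hinner : (inner ℝ (y - z) (w - y) : ℝ) = ∑ i, (y i - z i) * (w i - y i) := by
    rw [PiLp.inner_apply]
    apply Finset.sum_congr rfl
    intro i _
    simp [PiLp.sub_apply, RCLike.inner_apply, mul_comm]
  have hinner' : (0 : ℝ) ≤ inner ℝ (y - z) (w - y) := by
    rw [hinner]
    have : ∑ i, (y i - z i) * (w i - y i) = -∑ i, (z i - y i) * (w i - y i) := by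
      rw [← Finset.sum_neg_distrib]
      apply Finset.sum_congr rfl
      intro i _; ring
    rw [this]; linarith
  have hexp : ‖w - z‖ ^ 2 = ‖y - z‖ ^ 2 + ‖w - y‖ ^ 2 + 2 * (inner ℝ (y - z) (w - y) : ℝ) := by
    have : w - z = (y - z) + (w - y) := by abel
    rw [this, norm_add_sq_real]
    ring
  constructor
  · have h1 : ‖y - z‖ ^ 2 ≤ ‖w - z‖ ^ 2 := by nlinarith [sq_nonneg ‖w - y‖]
    have := norm_nonneg (w - z)
    nlinarith [norm_nonneg (y - z)]
  · intro heq
    have heqsq : ‖y - z‖ ^ 2 = ‖w - z‖ ^ 2 := by rw [heq]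
    have h1 : ‖w - y‖ ^ 2 ≤ 0 := by nlinarith
    have h2 : ‖w - y‖ = 0 := by nlinarith [norm_nonneg (w - y)]
    have := norm_sub_eq_zero_iff.mp h2
    exact this
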